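/- arXiv:2512.04297 — 3 statements merged into one kernel-verified Lean document; each statement's English description precedes it below -/
import Mathlib

section
/- Let A be a 4×4 real matrix of the block form A = [[B, 0],[0, C]] with B = [[y₃, y₂],[y₄, -y₁]] and C = [[y₃, -y₄],[-y₂, -y₁]] for real numbers y₁, y₂, y₃, y₄. Then ‖A‖_Fr² ≥ 2‖A‖_op², i.e., tr(AᵀA) ≥ 2‖A‖_op². -/
open Matrix

/-- Squared Frobenius norm of a real matrix: `tr(Aᵀ A)`. -/
noncomputable def frobSq {n m : Type*} [Fintype n] [Fintype m] (A : Matrix n m ℝ) : ℝ :=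
  (Aᵀ * A).trace

/-- Operator norm of a real matrix acting between Euclidean spaces. -/
noncomputable def opN {n m : Type*} [Fintype n] [Fintype m] [DecidableEq m]
    (A : Matrix n m ℝ) : ℝ :=
  ‖LinearMap.toContinuousLinearMap (Matrix.toEuclideanLin A)‖

/-- For the 4×4 block-diagonal matrix `A = diag(B, C)` with `B = [[y₃,y₂],[y₄,-y₁]]`
and `C = [[y₃,-y₄],[-y₂,-y₁]]`, we have `tr(AᵀA) = ‖A‖_Fr² ≥ 2‖A‖_op²`. -/
theorem stmt2 (y₁ y₂ y₃ y₄ : ℝ) :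
    2 * opN (Matrix.fromBlocks !![y₃, y₂; y₄, -y₁] 0 0 !![y₃, -y₄; -y₂, -y₁]) ^ 2 ≤
      frobSq (Matrix.fromBlocks !![y₃, y₂; y₄, -y₁] 0 0 !![y₃, -y₄; -y₂, -y₁]) := by
  set A := Matrix.fromBlocks !![y₃, y₂; y₄, -y₁] 0 0 !![y₃, -y₄; -y₂, -y₁] with hA
  have hfr : frobSq A = 2 * (y₁^2 + y₂^2 + y₃^2 + y₄^2) := by
    simp [frobSq, hA, Matrix.trace, Matrix.mul_apply, Fin.sum_univ_succ, Matrix.fromBlocks,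
      Matrix.transpose]
    ring
  have hop : opN A ≤ Real.sqrt (y₁^2 + y₂^2 + y₃^2 + y₄^2) := by
    apply ContinuousLinearMap.opNorm_le_bound _ (Real.sqrt_nonneg _)
    intro x
    rw [EuclideanSpace.norm_eq, EuclideanSpace.norm_eq,
      ← Real.sqrt_mul (by positivity) (∑ i, ‖x i‖ ^ 2)]
    apply Real.sqrt_le_sqrt
    simp only [LinearMap.coe_toContinuousLinearMap', Matrix.toEuclideanLin_apply]
    simp only [PiLp.toLp_apply, Matrix.mulVec, dotProduct,
      Fintype.sum_sum_type, Fin.sum_univ_two, hA, Matrix.fromBlocks,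
      Real.norm_eq_abs, sq_abs]
    simp [Matrix.fromBlocks_apply₁₁]
    nlinarith [sq_nonneg (y₃ * x (Sum.inl 1) - y₂ * x (Sum.inl 0)),
      sq_nonneg (y₄ * x (Sum.inl 1) + y₁ * x (Sum.inl 0)),
      sq_nonneg (y₃ * x (Sum.inr 1) + y₄ * x (Sum.inr 0)),
      sq_nonneg (y₂ * x (Sum.inr 1) - y₁ * x (Sum.inr 0)),
      sq_nonneg (x (Sum.inl 0)), sq_nonneg (x (Sum.inl 1)),
      sq_nonneg (x (Sum.inr 0)), sq_nonneg (x (Sum.inr 1))]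
  have h0 : (0:ℝ) ≤ opN A := norm_nonneg _
  have hsq : opN A ^ 2 ≤ y₁^2 + y₂^2 + y₃^2 + y₄^2 := by
    calc opN A ^ 2 ≤ Real.sqrt (y₁^2 + y₂^2 + y₃^2 + y₄^2) ^ 2 :=
          pow_le_pow_left₀ h0 hop 2
      _ = y₁^2 + y₂^2 + y₃^2 + y₄^2 := Real.sq_sqrt (by positivity)
  rw [hfr]
  linarith
end

section
/- Abstract mixing rate propagation, case 0 < s < s₀: let (T_t)_{t≥0} be linear operators on mean-free L²(𝕋^d) that preserve the L²-norm (‖T_t f‖_{L²} = ‖f‖_{L²}), and suppose there are s₀ > 0, γ > 0, C ≥ 0 with ‖T_t f‖_{H^{−s₀}} ≤ C e^{−γt} ‖f‖_{H^{s₀}} for all f ∈ H^{s₀}₀, t ≥ 0. Then for any 0 < s < s₀ there exists C' ≥ 0 (namely C' = C^{s/s₀} + 1) such that ‖T_t f‖_{H^{−s}} ≤ C' e^{−(s/(2s₀−s)) γ t} ‖f‖_{H^{s}} for all f ∈ H^{s}₀ and t ≥ 0. -/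
/-- Euclidean norm of a frequency `k ∈ ℤ^d`. -/
noncomputable def knorm {d : ℕ} (k : Fin d → ℤ) : ℝ :=
  Real.sqrt (∑ i, ((k i : ℝ)) ^ 2)

/-- Squared Sobolev norm `‖f‖²_{H^s} = Σ_{k ≠ 0} |f̂_k|² ‖k‖^{2s}`. -/
noncomputable def sobSq {d : ℕ} (s : ℝ) (a : (Fin d → ℤ) → ℂ) : ℝ :=
  ∑' k : Fin d → ℤ, if k = 0 then 0 else ‖a k‖ ^ 2 * knorm k ^ (2 * s)

/-- Membership in `H^s` (mean-free): summability of the defining series. -/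
def MemSob {d : ℕ} (s : ℝ) (a : (Fin d → ℤ) → ℂ) : Prop :=
  Summable (fun k : Fin d → ℤ => if k = 0 then 0 else ‖a k‖ ^ 2 * knorm k ^ (2 * s))

/-- Sobolev norm `‖f‖_{H^s}`. -/
noncomputable def sobNorm {d : ℕ} (s : ℝ) (a : (Fin d → ℤ) → ℂ) : ℝ :=
  Real.sqrt (sobSq s a)

section Aux
open Real

variable {d : ℕ}

noncomputable def sterm (s : ℝ) (a : (Fin d → ℤ) → ℂ) (k : Fin d → ℤ) : ℝ :=
  if k = 0 then 0 else ‖a k‖ ^ 2 * knorm k ^ (2 * s)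

lemma knorm_nonneg (k : Fin d → ℤ) : 0 ≤ knorm k := Real.sqrt_nonneg _

lemma sterm_nonneg (s : ℝ) (a : (Fin d → ℤ) → ℂ) (k : Fin d → ℤ) : 0 ≤ sterm s a k := by
  unfold sterm; split
  · exact le_refl _
  · exact mul_nonneg (sq_nonneg _) (Real.rpow_nonneg (knorm_nonneg k) _)

lemma memSob_iff (s : ℝ) (a : (Fin d → ℤ) → ℂ) : MemSob s a ↔ Summable (sterm s a) := Iff.rfl

lemma sobSq_eq (s : ℝ) (a : (Fin d → ℤ) → ℂ) : sobSq s a = ∑' k, sterm s a k := rfl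

lemma sobSq_nonneg (s : ℝ) (a : (Fin d → ℤ) → ℂ) : 0 ≤ sobSq s a := by
  rw [sobSq_eq]; exact tsum_nonneg (sterm_nonneg s a)

lemma sobNorm_nonneg (s : ℝ) (a : (Fin d → ℤ) → ℂ) : 0 ≤ sobNorm s a := Real.sqrt_nonneg _

lemma one_le_knorm {k : Fin d → ℤ} (hk : k ≠ 0) : 1 ≤ knorm k := by
  obtain ⟨i, hi⟩ := Function.ne_iff.mp hk
  have h0 : (1:ℤ) ≤ |k i| := Int.one_le_abs hi
  have h0' : (1:ℝ) ≤ |(k i : ℝ)| := by exact_mod_cast (by simpa using h0 : (1:ℤ) ≤ |k i|)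
  have h1 : (1:ℝ) ≤ ((k i : ℝ)) ^ 2 := by
    rw [← sq_abs]; nlinarith
  have h2 : (1:ℝ) ≤ ∑ j, ((k j : ℝ)) ^ 2 :=
    h1.trans (Finset.single_le_sum (f := fun j => ((k j : ℝ)) ^ 2)
      (fun j _ => sq_nonneg _) (Finset.mem_univ i))
  calc (1:ℝ) = Real.sqrt 1 := (Real.sqrt_one).symm
    _ ≤ knorm k := Real.sqrt_le_sqrt h2

lemma sterm_mono {s s' : ℝ} (h : s ≤ s') (a : (Fin d → ℤ) → ℂ) (k : Fin d → ℤ) :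
    sterm s a k ≤ sterm s' a k := by
  unfold sterm; split
  · exact le_refl _
  · next hk =>
      exact mul_le_mul_of_nonneg_left
        (Real.rpow_le_rpow_of_exponent_le (one_le_knorm hk) (by linarith)) (sq_nonneg _)

lemma memSob_mono {s s' : ℝ} (h : s ≤ s') {a : (Fin d → ℤ) → ℂ} (ha : MemSob s' a) :
    MemSob s a :=
  Summable.of_nonneg_of_le (sterm_nonneg s a) (fun k => sterm_mono h a k) ha

lemma sob_le_of_le {s s' : ℝ} {a b : (Fin d → ℤ) → ℂ} {c : ℝ}
    (hb : MemSob s' b) (h : ∀ k, sterm s a k ≤ c * sterm s' b k) :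
    MemSob s a ∧ sobSq s a ≤ c * sobSq s' b := by
  have hb' : Summable (fun k => c * sterm s' b k) := ((memSob_iff _ _).mp hb).mul_left c
  have hsa : Summable (sterm s a) := Summable.of_nonneg_of_le (sterm_nonneg s a) h hb'
  refine ⟨hsa, ?_⟩
  rw [sobSq_eq, sobSq_eq, ← tsum_mul_left]
  exact Summable.tsum_le_tsum h hsa hb'

lemma sobNorm_le_of_sq_le {s s' : ℝ} {a b : (Fin d → ℤ) → ℂ} {c : ℝ} (hc : 0 ≤ c)
    (h : sobSq s a ≤ c ^ 2 * sobSq s' b) : sobNorm s a ≤ c * sobNorm s' b := by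
  rw [sobNorm, sobNorm]
  calc Real.sqrt (sobSq s a) ≤ Real.sqrt (c ^ 2 * sobSq s' b) := Real.sqrt_le_sqrt h
    _ = c * Real.sqrt (sobSq s' b) := by
        rw [Real.sqrt_mul (sq_nonneg c), Real.sqrt_sq hc]

lemma sobNorm_mono {s s' : ℝ} (h : s ≤ s') {a : (Fin d → ℤ) → ℂ} (ha : MemSob s' a) :
    sobNorm s a ≤ sobNorm s' a := by
  have := sobNorm_le_of_sq_le (s := s) (s' := s') (a := a) (b := a) (c := 1) zero_le_one ?_
  · simpa using this
  · rw [one_pow, one_mul, sobSq_eq, sobSq_eq]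
    exact Summable.tsum_le_tsum (fun k => sterm_mono h a k) (memSob_mono h ha) ha

lemma sobNorm_add_le {s : ℝ} {f g : (Fin d → ℤ) → ℂ} (hf : MemSob s f) (hg : MemSob s g) :
    sobNorm s (f + g) ≤ sobNorm s f + sobNorm s g := by
  set u : (Fin d → ℤ) → ℝ := fun k => Real.sqrt (sterm s f k) with hu_def
  set v : (Fin d → ℤ) → ℝ := fun k => Real.sqrt (sterm s g k) with hv_def
  have h2 : (2:ℝ) = ((2:ℕ) : ℝ) := by norm_num
  have hu2 : ∀ k, u k ^ (2:ℝ) = sterm s f k := fun k => by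
    rw [h2, Real.rpow_natCast, Real.sq_sqrt (sterm_nonneg s f k)]
  have hv2 : ∀ k, v k ^ (2:ℝ) = sterm s g k := fun k => by
    rw [h2, Real.rpow_natCast, Real.sq_sqrt (sterm_nonneg s g k)]
  have hfs : Summable (fun k => u k ^ (2:ℝ)) := by simpa only [hu2] using (memSob_iff _ _).mp hf
  have hgs : Summable (fun k => v k ^ (2:ℝ)) := by simpa only [hv2] using (memSob_iff _ _).mp hg
  have mink := Real.Lp_add_le_tsum_of_nonneg (f := u) (g := v) one_le_two
    (fun k => Real.sqrt_nonneg _) (fun k => Real.sqrt_nonneg _) hfs hgs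
  have key : ∀ k, sterm s (f + g) k ≤ (u k + v k) ^ (2:ℝ) := by
    intro k
    by_cases hk : k = 0
    · simp only [sterm, hk, if_pos rfl]
      exact Real.rpow_nonneg (add_nonneg (Real.sqrt_nonneg _) (Real.sqrt_nonneg _)) _
    · have hw : (0:ℝ) ≤ knorm k ^ (2 * s) := Real.rpow_nonneg (knorm_nonneg k) _
      have hu' : u k = ‖f k‖ * Real.sqrt (knorm k ^ (2 * s)) := by
        rw [hu_def]; simp only [sterm, if_neg hk]
        rw [Real.sqrt_mul (sq_nonneg _), Real.sqrt_sq (norm_nonneg _)]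
      have hv' : v k = ‖g k‖ * Real.sqrt (knorm k ^ (2 * s)) := by
        rw [hv_def]; simp only [sterm, if_neg hk]
        rw [Real.sqrt_mul (sq_nonneg _), Real.sqrt_sq (norm_nonneg _)]
      rw [h2, Real.rpow_natCast, hu', hv', ← add_mul, mul_pow,
        Real.sq_sqrt hw]
      simp only [sterm, if_neg hk, Pi.add_apply]
      exact mul_le_mul_of_nonneg_right
        (pow_le_pow_left₀ (norm_nonneg _) (norm_add_le _ _) 2) hw
  have hsum_add : Summable (fun k => sterm s (f + g) k) :=
    Summable.of_nonneg_of_le (sterm_nonneg s _) key mink.1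
  have step1 : sobSq s (f + g) ≤ ∑' k, (u k + v k) ^ (2:ℝ) := by
    rw [sobSq_eq]; exact Summable.tsum_le_tsum key hsum_add mink.1
  have : sobNorm s (f + g) = sobSq s (f + g) ^ ((1:ℝ)/2) := by
    rw [sobNorm, Real.sqrt_eq_rpow]
  rw [this]
  calc sobSq s (f + g) ^ ((1:ℝ)/2)
      ≤ (∑' k, (u k + v k) ^ (2:ℝ)) ^ ((1:ℝ)/2) :=
        Real.rpow_le_rpow (sobSq_nonneg s _) step1 (by norm_num)
    _ ≤ (∑' k, u k ^ (2:ℝ)) ^ ((1:ℝ)/2) + (∑' k, v k ^ (2:ℝ)) ^ ((1:ℝ)/2) := mink.2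
    _ = sobNorm s f + sobNorm s g := by
        simp only [hu2, hv2]
        rw [sobNorm, sobNorm, Real.sqrt_eq_rpow, Real.sqrt_eq_rpow, sobSq_eq, sobSq_eq]

end Aux

section Aux2
open Real
variable {d : ℕ}

lemma sqrt_rpow' (X : ℝ) (hX : 0 ≤ X) (e : ℝ) : Real.sqrt (X ^ e) = Real.sqrt X ^ e := by
  rw [Real.sqrt_eq_rpow, Real.sqrt_eq_rpow, ← Real.rpow_mul hX, ← Real.rpow_mul hX, mul_comm]

lemma rpow_sq' {N : ℝ} (hN : 0 ≤ N) (e : ℝ) : (N ^ e) ^ 2 = N ^ (2 * e) := by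
  rw [← Real.rpow_natCast (N ^ e) 2, ← Real.rpow_mul hN]
  norm_num [mul_comm]

lemma rpow_interp_self {A : ℝ} (hA : 0 ≤ A) {α : ℝ} (hα : 0 < α) (hα1 : α < 1) :
    A ^ α * A ^ (1 - α) = A := by
  rw [← Real.rpow_add' hA (by norm_num), show α + (1 - α) = 1 by ring, Real.rpow_one]

lemma sobNorm_interp {s s₀ : ℝ} (hs : 0 < s) (hss : s < s₀) {g : (Fin d → ℤ) → ℂ}
    (hg : MemSob 0 g) :
    sobNorm (-s) g ≤ sobNorm (-s₀) g ^ (s / s₀) * sobNorm 0 g ^ (1 - s / s₀) := by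
  have hs₀ : 0 < s₀ := hs.trans hss
  have hds : s₀ - s ≠ 0 := by linarith
  set α := s / s₀ with hα_def
  have hα0 : 0 < α := div_pos hs hs₀
  have hα1 : α < 1 := (div_lt_one hs₀).mpr hss
  set F : (Fin d → ℤ) → ℝ := fun k => sterm (-s₀) g k ^ α with hF_def
  set G : (Fin d → ℤ) → ℝ := fun k => sterm 0 g k ^ (1 - α) with hG_def
  have hFG : ∀ k, sterm (-s) g k = F k * G k := by
    intro k
    by_cases hk : k = 0
    · simp [hF_def, hG_def, sterm, hk, Real.zero_rpow hα0.ne',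
        Real.zero_rpow (by linarith : (1:ℝ) - α ≠ 0)]
    · have hw : (0:ℝ) < knorm k := lt_of_lt_of_le one_pos (one_le_knorm hk)
      have hx : (0:ℝ) ≤ ‖g k‖ ^ 2 := sq_nonneg _
      simp only [hF_def, hG_def, sterm, if_neg hk]
      rw [Real.mul_rpow hx (Real.rpow_nonneg hw.le _),
          Real.mul_rpow hx (Real.rpow_nonneg hw.le _),
          ← Real.rpow_mul hw.le, ← Real.rpow_mul hw.le]
      have e1 : 2 * -s₀ * α = 2 * -s := by
        rw [hα_def]; field_simp
      have e2 : 2 * (0:ℝ) * (1 - α) = 0 := by ring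
      rw [e1, e2, Real.rpow_zero, mul_one]
      have hxx : (‖g k‖ ^ 2 : ℝ) ^ α * (‖g k‖ ^ 2) ^ (1 - α) = ‖g k‖ ^ 2 :=
        rpow_interp_self hx hα0 hα1
      rw [mul_right_comm, hxx]
  have hpq : Real.HolderConjugate (s₀ / s) (s₀ / (s₀ - s)) := by
    rw [Real.holderConjugate_iff]; constructor
    · rw [lt_div_iff₀ hs]; linarith
    · rw [inv_div, inv_div, ← add_div]
      field_simp
      ring
  have hg₀ : MemSob (-s₀) g := memSob_mono (by linarith) hg
  have hFp : ∀ k, F k ^ (s₀ / s) = sterm (-s₀) g k := by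
    intro k
    rw [hF_def, ← Real.rpow_mul (sterm_nonneg _ _ _), hα_def,
      div_mul_div_comm, mul_comm, div_self (by positivity), Real.rpow_one]
  have hGq : ∀ k, G k ^ (s₀ / (s₀ - s)) = sterm 0 g k := by
    intro k
    rw [hG_def, ← Real.rpow_mul (sterm_nonneg _ _ _)]
    have : (1 - α) * (s₀ / (s₀ - s)) = 1 := by
      rw [hα_def]; field_simp
    rw [this, Real.rpow_one]
  have hFs : Summable (fun k => F k ^ (s₀ / s)) := by
    simpa only [hFp] using ((memSob_iff _ _).mp hg₀)
  have hGs : Summable (fun k => G k ^ (s₀ / (s₀ - s))) := by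
    simpa only [hGq] using ((memSob_iff _ _).mp hg)
  have hold := Real.inner_le_Lp_mul_Lq_tsum_of_nonneg (f := F) (g := G) hpq
    (fun k => Real.rpow_nonneg (sterm_nonneg _ _ _) _)
    (fun k => Real.rpow_nonneg (sterm_nonneg _ _ _) _) hFs hGs
  simp only [hFp, hGq] at hold
  have h1p : 1 / (s₀ / s) = α := by rw [one_div_div, hα_def]
  have h1q : 1 / (s₀ / (s₀ - s)) = 1 - α := by
    rw [one_div_div, hα_def]; field_simp
  rw [h1p, h1q] at hold
  have hSq : sobSq (-s) g ≤ sobSq (-s₀) g ^ α * sobSq 0 g ^ (1 - α) := by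
    rw [sobSq_eq (-s) g, tsum_congr hFG]
    calc ∑' k, F k * G k ≤ (∑' k, sterm (-s₀) g k) ^ α * (∑' k, sterm 0 g k) ^ (1 - α) := hold
      _ = sobSq (-s₀) g ^ α * sobSq 0 g ^ (1 - α) := by rw [sobSq_eq, sobSq_eq]
  rw [sobNorm, sobNorm, sobNorm]
  calc Real.sqrt (sobSq (-s) g)
      ≤ Real.sqrt (sobSq (-s₀) g ^ α * sobSq 0 g ^ (1 - α)) := Real.sqrt_le_sqrt hSq
    _ = Real.sqrt (sobSq (-s₀) g) ^ α * Real.sqrt (sobSq 0 g) ^ (1 - α) := by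
        rw [Real.sqrt_mul (Real.rpow_nonneg (sobSq_nonneg _ _) _),
          sqrt_rpow' _ (sobSq_nonneg _ _), sqrt_rpow' _ (sobSq_nonneg _ _)]

end Aux2

/-- Mixing rate propagation, case `0 < s < s₀`: if the linear operators `T_t` preserve
mean-freeness and the `L²`-norm and satisfy
`‖T_t f‖_{H^{−s₀}} ≤ C e^{−γt}‖f‖_{H^{s₀}}`, then for `0 < s < s₀`, with
`C' = C^{s/s₀} + 1`, they satisfy
`‖T_t f‖_{H^{−s}} ≤ C' e^{−(s/(2s₀−s))γt}‖f‖_{H^{s}}`. -/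
theorem stmt10 {d : ℕ} (T : ℝ → ((Fin d → ℤ) → ℂ) →ₗ[ℂ] ((Fin d → ℤ) → ℂ))
    (s₀ γ C : ℝ) (hs₀ : 0 < s₀) (hγ : 0 < γ) (hC : 0 ≤ C)
    (hT0 : ∀ t, 0 ≤ t → ∀ f : (Fin d → ℤ) → ℂ, f 0 = 0 → (T t f) 0 = 0)
    (hTL2 : ∀ t, 0 ≤ t → ∀ f : (Fin d → ℤ) → ℂ, MemSob 0 f → MemSob 0 (T t f))
    (hpres : ∀ t, 0 ≤ t → ∀ f : (Fin d → ℤ) → ℂ, f 0 = 0 → MemSob 0 f →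
      sobNorm 0 (T t f) = sobNorm 0 f)
    (hmix : ∀ t, 0 ≤ t → ∀ f : (Fin d → ℤ) → ℂ, f 0 = 0 → MemSob s₀ f →
      sobNorm (-s₀) (T t f) ≤ C * Real.exp (-γ * t) * sobNorm s₀ f) :
    ∀ s, 0 < s → s < s₀ → ∀ t, 0 ≤ t → ∀ f : (Fin d → ℤ) → ℂ, f 0 = 0 → MemSob s f →
      sobNorm (-s) (T t f) ≤
        (C ^ (s / s₀) + 1) * Real.exp (-(s / (2 * s₀ - s)) * γ * t) * sobNorm s f := by
  intro s hs hss t ht f hf0 hfs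
  have hden : 0 < 2 * s₀ - s := by linarith
  set N : ℝ := Real.exp (γ * t / (2 * s₀ - s)) with hN_def
  have hN1 : 1 ≤ N := Real.one_le_exp (by positivity)
  have hN0 : 0 < N := lt_of_lt_of_le one_pos hN1
  set flow : (Fin d → ℤ) → ℂ := fun k => if knorm k ≤ N then f k else 0 with hflow
  set fhigh : (Fin d → ℤ) → ℂ := fun k => if knorm k ≤ N then 0 else f k with hfhigh
  have hflow0 : flow 0 = 0 := by
    simp only [hflow]; split_ifs <;> simp [hf0]
  have hfhigh0 : fhigh 0 = 0 := by
    simp only [hfhigh]; split_ifs <;> simp [hf0]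
  -- pointwise bounds
  have hb1 : ∀ k, sterm s₀ flow k ≤ N ^ (2 * (s₀ - s)) * sterm s f k := by
    intro k
    by_cases hk : k = 0
    · simp [sterm, hk]
    · by_cases hkN : knorm k ≤ N
      · simp only [sterm, if_neg hk, hflow, if_pos hkN]
        have hkpos : (0:ℝ) < knorm k := lt_of_lt_of_le one_pos (one_le_knorm hk)
        have h1 : knorm k ^ (2 * s₀) = knorm k ^ (2 * (s₀ - s)) * knorm k ^ (2 * s) := by
          rw [← Real.rpow_add hkpos]; ring_nf
        have h2 : knorm k ^ (2 * (s₀ - s)) ≤ N ^ (2 * (s₀ - s)) :=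
          Real.rpow_le_rpow (knorm_nonneg k) hkN (by linarith)
        calc ‖f k‖ ^ 2 * knorm k ^ (2 * s₀)
            = ‖f k‖ ^ 2 * (knorm k ^ (2 * (s₀ - s)) * knorm k ^ (2 * s)) := by rw [h1]
          _ ≤ ‖f k‖ ^ 2 * (N ^ (2 * (s₀ - s)) * knorm k ^ (2 * s)) := by
              exact mul_le_mul_of_nonneg_left
                (mul_le_mul_of_nonneg_right h2 (Real.rpow_nonneg (knorm_nonneg k) _))
                (sq_nonneg _)
          _ = N ^ (2 * (s₀ - s)) * (‖f k‖ ^ 2 * knorm k ^ (2 * s)) := by ring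
      · simp only [sterm, if_neg hk, hflow, if_neg hkN, norm_zero]
        have : (0:ℝ) ^ 2 * knorm k ^ (2 * s₀) = 0 := by ring
        rw [this]
        exact mul_nonneg (Real.rpow_nonneg hN0.le _)
          (mul_nonneg (sq_nonneg _) (Real.rpow_nonneg (knorm_nonneg k) _))
  have hb2 : ∀ k, sterm 0 flow k ≤ 1 ^ 2 * sterm s f k := by
    intro k
    rw [one_pow, one_mul]
    refine le_trans ?_ (sterm_mono hs.le f k)
    by_cases hk : k = 0
    · simp [sterm, hk]
    · simp only [sterm, if_neg hk, hflow]
      split_ifs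
      · exact le_refl _
      · simp only [norm_zero]
        have : (0:ℝ) ^ 2 * knorm k ^ (2 * (0:ℝ)) = 0 := by ring
        rw [this]
        exact mul_nonneg (sq_nonneg _) (Real.rpow_nonneg (knorm_nonneg k) _)
  have hb3 : ∀ k, sterm 0 fhigh k ≤ (N ^ (-s)) ^ 2 * sterm s f k := by
    intro k
    by_cases hk : k = 0
    · simp [sterm, hk]
    · simp only [sterm, if_neg hk, hfhigh]
      split_ifs with hkN
      · simp only [norm_zero]
        have : (0:ℝ) ^ 2 * knorm k ^ (2 * (0:ℝ)) = 0 := by ring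
        rw [this]
        exact mul_nonneg (sq_nonneg _)
          (mul_nonneg (sq_nonneg _) (Real.rpow_nonneg (knorm_nonneg k) _))
      · have hNk : N ≤ knorm k := le_of_not_ge hkN
        rw [rpow_sq' hN0.le]
        have h1 : (1:ℝ) ≤ N ^ (2 * -s) * knorm k ^ (2 * s) := by
          have hNN : N ^ (2 * -s) * N ^ (2 * s) = 1 := by
            rw [← Real.rpow_add hN0]; norm_num
          calc (1:ℝ) = N ^ (2 * -s) * N ^ (2 * s) := hNN.symm
            _ ≤ N ^ (2 * -s) * knorm k ^ (2 * s) :=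
                mul_le_mul_of_nonneg_left
                  (Real.rpow_le_rpow hN0.le hNk (by linarith))
                  (Real.rpow_nonneg hN0.le _)
        calc ‖f k‖ ^ 2 * knorm k ^ (2 * (0:ℝ))
            = ‖f k‖ ^ 2 * 1 := by rw [mul_zero, Real.rpow_zero]
          _ ≤ ‖f k‖ ^ 2 * (N ^ (2 * -s) * knorm k ^ (2 * s)) :=
              mul_le_mul_of_nonneg_left h1 (sq_nonneg _)
          _ = N ^ (2 * -s) * (‖f k‖ ^ 2 * knorm k ^ (2 * s)) := by ring
  obtain ⟨hmem1, hsq1⟩ := sob_le_of_le hfs hb1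
  obtain ⟨hmem2, hsq2⟩ := sob_le_of_le hfs hb2
  obtain ⟨hmem3, hsq3⟩ := sob_le_of_le hfs hb3
  have hnorm1 : sobNorm s₀ flow ≤ N ^ (s₀ - s) * sobNorm s f := by
    refine sobNorm_le_of_sq_le (Real.rpow_nonneg hN0.le _) ?_
    rw [rpow_sq' hN0.le]; exact hsq1
  have hnorm2 : sobNorm 0 flow ≤ sobNorm s f := by
    have := sobNorm_le_of_sq_le zero_le_one hsq2
    simpa using this
  have hnorm3 : sobNorm 0 fhigh ≤ N ^ (-s) * sobNorm s f :=
    sobNorm_le_of_sq_le (Real.rpow_nonneg hN0.le _) hsq3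
  -- apply T
  have hg1mem0 : MemSob 0 (T t flow) := hTL2 t ht flow hmem2
  have hg2mem0 : MemSob 0 (T t fhigh) := hTL2 t ht fhigh hmem3
  have hg10 : (T t flow) 0 = 0 := hT0 t ht flow hflow0
  have hg20 : (T t fhigh) 0 = 0 := hT0 t ht fhigh hfhigh0
  have hg1ms : MemSob (-s) (T t flow) := memSob_mono (by linarith) hg1mem0
  have hg2ms : MemSob (-s) (T t fhigh) := memSob_mono (by linarith) hg2mem0
  have hsplitT : T t f = T t flow + T t fhigh := by
    rw [← map_add]
    congr 1
    funext k
    simp only [hflow, hfhigh, Pi.add_apply]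
    split_ifs <;> simp
  set E : ℝ := Real.exp (-(s / (2 * s₀ - s)) * γ * t) with hE_def
  set A : ℝ := sobNorm s f with hA_def
  have hA0 : 0 ≤ A := sobNorm_nonneg s f
  have hE0 : 0 < E := Real.exp_pos _
  -- exponent arithmetic
  have hEhigh : N ^ (-s) = E := by
    rw [hN_def, hE_def, ← Real.exp_mul]
    congr 1
    ring
  have hElow : Real.exp (-γ * t) ^ (s / s₀) * (N ^ (s₀ - s)) ^ (s / s₀) = E := by
    rw [hN_def, hE_def, ← Real.exp_mul, ← Real.exp_mul, ← Real.exp_mul, ← Real.exp_add]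
    congr 1
    have hden' : 2 * s₀ - s ≠ 0 := hden.ne'
    field_simp
    linear_combination t * mul_inv_cancel₀ hden'
  -- high-frequency bound
  have hhigh : sobNorm (-s) (T t fhigh) ≤ E * A := by
    calc sobNorm (-s) (T t fhigh) ≤ sobNorm 0 (T t fhigh) :=
          sobNorm_mono (by linarith) hg2mem0
      _ = sobNorm 0 fhigh := hpres t ht fhigh hfhigh0 hmem3
      _ ≤ N ^ (-s) * A := hnorm3
      _ = E * A := by rw [hEhigh]
  -- low-frequency bound
  have hα0 : (0:ℝ) ≤ s / s₀ := by positivity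
  have hβ0 : (0:ℝ) ≤ 1 - s / s₀ := by
    have : s / s₀ < 1 := (div_lt_one hs₀).mpr hss
    linarith
  have hlow : sobNorm (-s) (T t flow) ≤ C ^ (s / s₀) * (E * A) := by
    have hinterp := sobNorm_interp hs hss hg1mem0
    have hmix' : sobNorm (-s₀) (T t flow) ≤ C * Real.exp (-γ * t) * (N ^ (s₀ - s) * A) := by
      refine le_trans (hmix t ht flow hflow0 hmem1) ?_
      exact mul_le_mul_of_nonneg_left hnorm1
        (mul_nonneg hC (Real.exp_pos _).le)
    have hB : sobNorm 0 (T t flow) ≤ A := by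
      rw [hpres t ht flow hflow0 hmem2]; exact hnorm2
    calc sobNorm (-s) (T t flow)
        ≤ sobNorm (-s₀) (T t flow) ^ (s / s₀) * sobNorm 0 (T t flow) ^ (1 - s / s₀) := hinterp
      _ ≤ (C * Real.exp (-γ * t) * (N ^ (s₀ - s) * A)) ^ (s / s₀) * A ^ (1 - s / s₀) := by
          exact mul_le_mul
            (Real.rpow_le_rpow (sobNorm_nonneg _ _) hmix' hα0)
            (Real.rpow_le_rpow (sobNorm_nonneg _ _) hB hβ0)
            (Real.rpow_nonneg (sobNorm_nonneg _ _) _)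
            (Real.rpow_nonneg (by positivity) _)
      _ = C ^ (s / s₀) * (Real.exp (-γ * t) ^ (s / s₀) * (N ^ (s₀ - s)) ^ (s / s₀))
            * (A ^ (s / s₀) * A ^ (1 - s / s₀)) := by
          rw [Real.mul_rpow (mul_nonneg hC (Real.exp_pos _).le)
                (mul_nonneg (Real.rpow_nonneg hN0.le _) hA0),
              Real.mul_rpow hC (Real.exp_pos _).le,
              Real.mul_rpow (Real.rpow_nonneg hN0.le _) hA0]
          ring
      _ = C ^ (s / s₀) * (E * A) := by
          rw [hElow, rpow_interp_self hA0 (by positivity) ((div_lt_one hs₀).mpr hss), mul_assoc]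
  calc sobNorm (-s) (T t f) = sobNorm (-s) (T t flow + T t fhigh) := by rw [hsplitT]
    _ ≤ sobNorm (-s) (T t flow) + sobNorm (-s) (T t fhigh) := sobNorm_add_le hg1ms hg2ms
    _ ≤ C ^ (s / s₀) * (E * A) + E * A := add_le_add hlow hhigh
    _ = (C ^ (s / s₀) + 1) * E * A := by ring
end

section
/- Connectivity of the adjacency graph on ℤ² \ {0}: define two modes (k₁,l₁), (k₂,l₂) ∈ ℤ² \ {0} to be adjacent if either (k₁ = k₂ ≠ 0 and l₁ = l₂ ± 1) or (k₁ = k₂ ± 1 and l₁ = l₂ ≠ 0). Then the graph with vertex set ℤ² \ {0} and edges between adjacent modes is connected. -/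
/-- Two modes of `ℤ² \ {0}` are adjacent if they share a nonzero coordinate and the
other coordinate differs by one. -/
def ModeAdj (p q : ℤ × ℤ) : Prop :=
  (p.1 = q.1 ∧ p.1 ≠ 0 ∧ (p.2 = q.2 + 1 ∨ p.2 = q.2 - 1)) ∨
  (p.2 = q.2 ∧ p.2 ≠ 0 ∧ (p.1 = q.1 + 1 ∨ p.1 = q.1 - 1))

private def GM : SimpleGraph {p : ℤ × ℤ // p ≠ 0} :=
  SimpleGraph.fromRel (fun p q => ModeAdj p.1 q.1)

private lemma adj_of_modeAdj {p q : {p : ℤ × ℤ // p ≠ 0}} (h : ModeAdj p.1 q.1) :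
    GM.Adj p q := by
  refine ⟨?_, Or.inl h⟩
  intro he
  have h1 : p.1.1 = q.1.1 := by rw [he]
  have h2 : p.1.2 = q.1.2 := by rw [he]
  rcases h with ⟨_, _, h⟩ | ⟨_, _, h⟩ <;> omega

private lemma mk_ne (k l : ℤ) (hk : k ≠ 0) : ((k, l) : ℤ × ℤ) ≠ 0 := by
  simp [Prod.ext_iff, hk]

private lemma reach_vert (k : ℤ) (hk : k ≠ 0) (l : ℤ) :
    GM.Reachable ⟨(k, l), mk_ne k l hk⟩ ⟨(k, 1), mk_ne k 1 hk⟩ := by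
  induction l using Int.induction_on with
  | zero =>
    exact SimpleGraph.Adj.reachable (adj_of_modeAdj (Or.inl ⟨rfl, hk, Or.inr (by ring)⟩))
  | succ i ih =>
    refine SimpleGraph.Reachable.trans ?_ ih
    exact SimpleGraph.Adj.reachable
      (adj_of_modeAdj (q := ⟨(k, (i : ℤ)), mk_ne k i hk⟩) (Or.inl ⟨rfl, hk, Or.inl rfl⟩))
  | pred i ih =>
    refine SimpleGraph.Reachable.trans ?_ ih
    exact SimpleGraph.Adj.reachable
      (adj_of_modeAdj (q := ⟨(k, (-i : ℤ)), mk_ne k (-i) hk⟩)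
        (Or.inl ⟨rfl, hk, Or.inr (by ring)⟩))

private lemma mk_ne2 (k l : ℤ) (hl : l ≠ 0) : ((k, l) : ℤ × ℤ) ≠ 0 := by
  simp [Prod.ext_iff, hl]

private lemma reach_horiz (k : ℤ) :
    GM.Reachable ⟨(k, 1), mk_ne2 k 1 one_ne_zero⟩ ⟨(1, 1), mk_ne2 1 1 one_ne_zero⟩ := by
  induction k using Int.induction_on with
  | zero =>
    exact SimpleGraph.Adj.reachable (adj_of_modeAdj (Or.inr ⟨rfl, one_ne_zero, Or.inr (by ring)⟩))
  | succ i ih =>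
    rcases eq_or_ne (i : ℤ) 0 with h0 | h0
    · simp only [h0, zero_add]
      exact .refl _
    · refine SimpleGraph.Reachable.trans ?_ ih
      exact SimpleGraph.Adj.reachable
        (adj_of_modeAdj (q := ⟨((i : ℤ), 1), mk_ne2 i 1 one_ne_zero⟩)
          (Or.inr ⟨rfl, one_ne_zero, Or.inl rfl⟩))
  | pred i ih =>
    refine SimpleGraph.Reachable.trans ?_ ih
    exact SimpleGraph.Adj.reachable
      (adj_of_modeAdj (q := ⟨((-i : ℤ), 1), mk_ne2 (-i) 1 one_ne_zero⟩)
        (Or.inr ⟨rfl, one_ne_zero, Or.inr (by ring)⟩))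

/-- The graph with vertex set `ℤ² \ {0}` and edges between adjacent modes is
connected. -/
theorem stmt13 :
    (SimpleGraph.fromRel
      (fun p q : {p : ℤ × ℤ // p ≠ 0} => ModeAdj p.1 q.1)).Connected := by
  show GM.Connected
  have key : ∀ v : {p : ℤ × ℤ // p ≠ 0}, GM.Reachable v ⟨(1, 1), mk_ne2 1 1 one_ne_zero⟩ := by
    rintro ⟨⟨k, l⟩, hv⟩
    rcases eq_or_ne k 0 with hk | hk
    · subst hk
      have hl : l ≠ 0 := by
        intro h; exact hv (by simp [Prod.ext_iff, h])
      refine SimpleGraph.Reachable.trans ?_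
        (SimpleGraph.Reachable.trans (reach_vert 1 one_ne_zero l) (reach_horiz 1))
      exact SimpleGraph.Adj.reachable
        (adj_of_modeAdj (q := ⟨(1, l), mk_ne 1 l one_ne_zero⟩)
          (Or.inr ⟨rfl, hl, Or.inr (by ring)⟩))
    · have : (⟨(k, l), hv⟩ : {p : ℤ × ℤ // p ≠ 0}) = ⟨(k, l), mk_ne k l hk⟩ := rfl
      rw [this]
      exact SimpleGraph.Reachable.trans (reach_vert k hk l) (reach_horiz k)
  have : Nonempty {p : ℤ × ℤ // p ≠ 0} := ⟨⟨(1, 1), mk_ne2 1 1 one_ne_zero⟩⟩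
  exact ⟨fun u v => (key u).trans (key v).symm⟩
end
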